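/- Fix ν ∈ S¹ and assume that for every M ∈ ℕ the limit φ^{1,M}(ν) = lim_{t→∞} (1/t)·m_{[0,M]}(u_{0,ν}, Q_ν(0,t)) exists. Then the limit φ¹(ν) = lim_{M→∞} φ^{1,M}(ν)/M exists and is finite. -/

import Mathlib

open scoped ENNReal Classical
open Filter

/-- The canonical embedding of `ℤ³` into Euclidean `ℝ³`. -/
noncomputable def toR3 (x : ℤ × ℤ × ℤ) : EuclideanSpace ℝ (Fin 3) :=
  (WithLp.equiv 2 (Fin 3 → ℝ)).symm ![(x.1 : ℝ), (x.2.1 : ℝ), (x.2.2 : ℝ)]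

/-- The canonical embedding of `ℤ²` into Euclidean `ℝ²`. -/
noncomputable def toR2 (x : ℤ × ℤ) : EuclideanSpace ℝ (Fin 2) :=
  (WithLp.equiv 2 (Fin 2 → ℝ)).symm ![(x.1 : ℝ), (x.2 : ℝ)]

/-- The projection `P₂ : ℤ³ → ℤ²` onto the first two coordinates. -/
def P2z (x : ℤ × ℤ × ℤ) : ℤ × ℤ := (x.1, x.2.1)

/-- The rotation of `ν` by `π/2`, giving the second side direction of the square `Q_ν`. -/
noncomputable def rotDir (ν : EuclideanSpace ℝ (Fin 2)) : EuclideanSpace ℝ (Fin 2) :=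
  (WithLp.equiv 2 (Fin 2 → ℝ)).symm ![-(ν 1), ν 0]

/-- The open square `Q_ν(0,t) ⊂ ℝ²` centered at `0` with side length `t` and one pair of
sides orthogonal to `ν`. -/
noncomputable def sqQ (ν : EuclideanSpace ℝ (Fin 2)) (t : ℝ) :
    Set (EuclideanSpace ℝ (Fin 2)) :=
  {x | |@inner ℝ _ _ x ν| < t / 2 ∧ |@inner ℝ _ _ x (rotDir ν)| < t / 2}

/-- The jump configuration `u_{0,ν}`: equal to `1` where `⟨x,ν⟩ ≥ 0` and `-1` elsewhere. -/
noncomputable def u0 (ν : EuclideanSpace ℝ (Fin 2)) (x : EuclideanSpace ℝ (Fin 2)) : ℝ :=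
  if 0 ≤ @inner ℝ _ _ x ν then 1 else -1

/-- The slab energy `E_{[N,M]}(u,O)`: sum of `c(x-y)|u(x)-u(y)|` over pairs
`x, y ∈ ℤ² × {N,…,M}` with `P₂x, P₂y ∈ O`. -/
noncomputable def Eslab (c : EuclideanSpace ℝ (Fin 3) → ℝ) (N M : ℤ)
    (u : ℤ × ℤ × ℤ → ℝ) (O : Set (EuclideanSpace ℝ (Fin 2))) : ℝ≥0∞ :=
  ∑' x : ℤ × ℤ × ℤ, ∑' y : ℤ × ℤ × ℤ,
    if N ≤ x.2.2 ∧ x.2.2 ≤ M ∧ N ≤ y.2.2 ∧ y.2.2 ≤ M ∧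
        toR2 (P2z x) ∈ O ∧ toR2 (P2z y) ∈ O then
      ENNReal.ofReal (c (toR3 x - toR3 y) * |u x - u y|) else 0

/-- Admissibility for the minimum problem on `Q_ν(0,t)`: `u` is `{±1}`-valued and agrees
with `u_{0,ν}∘P₂` at all points whose projection is within distance `2L` of `∂Q_ν(0,t)`. -/
def BCslab (L : ℝ) (ν : EuclideanSpace ℝ (Fin 2)) (t : ℝ) (u : ℤ × ℤ × ℤ → ℝ) : Prop :=
  (∀ x, u x = 1 ∨ u x = -1) ∧
  ∀ x : ℤ × ℤ × ℤ, Metric.infDist (toR2 (P2z x)) (frontier (sqQ ν t)) ≤ 2 * L →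
    u x = u0 ν (toR2 (P2z x))

/-- The minimum value `m_{[N,M]}(u_{0,ν}, Q_ν(0,t))`. -/
noncomputable def mSlab (c : EuclideanSpace ℝ (Fin 3) → ℝ) (L : ℝ)
    (ν : EuclideanSpace ℝ (Fin 2)) (N M : ℤ) (t : ℝ) : ℝ :=
  (⨅ u : {u : ℤ × ℤ × ℤ → ℝ // BCslab L ν t u}, Eslab c N M u (sqQ ν t)).toReal

-- ===================== Part A : shift invariance =====================

def shiftE (k : ℤ) : (ℤ × ℤ × ℤ) ≃ (ℤ × ℤ × ℤ) where
  toFun x := (x.1, x.2.1, x.2.2 + k)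
  invFun x := (x.1, x.2.1, x.2.2 - k)
  left_inv x := by simp
  right_inv x := by simp

lemma toR3_shift_sub (x y : ℤ × ℤ × ℤ) (k : ℤ) :
    toR3 (x.1, x.2.1, x.2.2 + k) - toR3 (y.1, y.2.1, y.2.2 + k) = toR3 x - toR3 y := by
  ext i
  fin_cases i <;> simp [toR3, WithLp.equiv_symm_apply] <;> push_cast <;> ring

lemma Eslab_shift (c : EuclideanSpace ℝ (Fin 3) → ℝ) (N M k : ℤ)
    (u : ℤ × ℤ × ℤ → ℝ) (O : Set (EuclideanSpace ℝ (Fin 2))) :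
    Eslab c (N + k) (M + k) u O = Eslab c N M (fun x => u (x.1, x.2.1, x.2.2 + k)) O := by
  unfold Eslab
  conv_lhs => rw [← Equiv.tsum_eq (shiftE k)]
  refine tsum_congr fun x => ?_
  conv_lhs => rw [← Equiv.tsum_eq (shiftE k)]
  refine tsum_congr fun y => ?_
  have hx : toR3 ((shiftE k) x) - toR3 ((shiftE k) y) = toR3 x - toR3 y := toR3_shift_sub x y k
  simp only [shiftE, Equiv.coe_fn_mk, P2z] at *
  rw [hx]
  refine if_congr ?_ rfl rfl
  constructor <;> intro h <;>
    exact ⟨by omega, by omega, by omega, by omega, h.2.2.2.2⟩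

lemma BCslab_shift (L : ℝ) (ν : EuclideanSpace ℝ (Fin 2)) (t : ℝ) (u : ℤ × ℤ × ℤ → ℝ)
    (k : ℤ) (h : BCslab L ν t u) : BCslab L ν t (fun x => u (x.1, x.2.1, x.2.2 + k)) := by
  obtain ⟨h1, h2⟩ := h
  exact ⟨fun x => h1 _, fun x hx => h2 (x.1, x.2.1, x.2.2 + k) hx⟩

lemma iInf_shift (c : EuclideanSpace ℝ (Fin 3) → ℝ) (L : ℝ) (ν : EuclideanSpace ℝ (Fin 2))
    (t : ℝ) (N M k : ℤ) :
    (⨅ u : {u : ℤ × ℤ × ℤ → ℝ // BCslab L ν t u}, Eslab c (N + k) (M + k) u (sqQ ν t))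
      = ⨅ u : {u : ℤ × ℤ × ℤ → ℝ // BCslab L ν t u}, Eslab c N M u (sqQ ν t) := by
  apply le_antisymm
  · refine le_iInf fun u => ?_
    refine iInf_le_of_le ⟨fun x => u.1 (x.1, x.2.1, x.2.2 + -k), BCslab_shift L ν t u.1 (-k) u.2⟩ ?_
    rw [Eslab_shift]
    apply le_of_eq
    congr 1
    funext x
    simp
  · refine le_iInf fun u => ?_
    refine iInf_le_of_le ⟨fun x => u.1 (x.1, x.2.1, x.2.2 + k), BCslab_shift L ν t u.1 k u.2⟩ ?_
    exact le_of_eq (Eslab_shift c N M k u.1 (sqQ ν t)).symm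
-- ===================== Part B : superadditivity =====================

lemma Eslab_superadd (c : EuclideanSpace ℝ (Fin 3) → ℝ) (M1 M2 : ℤ)
    (h1 : 0 ≤ M1) (h2 : 0 ≤ M2) (u : ℤ × ℤ × ℤ → ℝ) (O : Set (EuclideanSpace ℝ (Fin 2))) :
    Eslab c 0 M1 u O + Eslab c (M1 + 1) (M1 + 1 + M2) u O ≤ Eslab c 0 (M1 + 1 + M2) u O := by
  unfold Eslab
  rw [← ENNReal.tsum_add]
  refine ENNReal.tsum_le_tsum fun x => ?_
  rw [← ENNReal.tsum_add]
  refine ENNReal.tsum_le_tsum fun y => ?_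
  set v := ENNReal.ofReal (c (toR3 x - toR3 y) * |u x - u y|) with hv
  by_cases hA : 0 ≤ x.2.2 ∧ x.2.2 ≤ M1 ∧ 0 ≤ y.2.2 ∧ y.2.2 ≤ M1 ∧
      toR2 (P2z x) ∈ O ∧ toR2 (P2z y) ∈ O
  · have hB : ¬ (M1 + 1 ≤ x.2.2 ∧ x.2.2 ≤ M1 + 1 + M2 ∧ M1 + 1 ≤ y.2.2 ∧
        y.2.2 ≤ M1 + 1 + M2 ∧ toR2 (P2z x) ∈ O ∧ toR2 (P2z y) ∈ O) := by
      rintro ⟨hb, -⟩; omega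
    have hC : 0 ≤ x.2.2 ∧ x.2.2 ≤ M1 + 1 + M2 ∧ 0 ≤ y.2.2 ∧ y.2.2 ≤ M1 + 1 + M2 ∧
        toR2 (P2z x) ∈ O ∧ toR2 (P2z y) ∈ O :=
      ⟨by omega, by omega, by omega, by omega, hA.2.2.2.2⟩
    rw [if_pos hA, if_neg hB, if_pos hC, add_zero]
  · by_cases hB : M1 + 1 ≤ x.2.2 ∧ x.2.2 ≤ M1 + 1 + M2 ∧ M1 + 1 ≤ y.2.2 ∧
        y.2.2 ≤ M1 + 1 + M2 ∧ toR2 (P2z x) ∈ O ∧ toR2 (P2z y) ∈ O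
    · have hC : 0 ≤ x.2.2 ∧ x.2.2 ≤ M1 + 1 + M2 ∧ 0 ≤ y.2.2 ∧ y.2.2 ≤ M1 + 1 + M2 ∧
          toR2 (P2z x) ∈ O ∧ toR2 (P2z y) ∈ O :=
        ⟨by omega, by omega, by omega, by omega, hB.2.2.2.2⟩
      rw [if_pos hC, if_neg hA, if_pos hB, zero_add]
    · rw [if_neg hA, if_neg hB, add_zero]
      exact zero_le

-- ===================== Part C : finiteness =====================

lemma comp_le_norm {n : ℕ} (v : EuclideanSpace ℝ (Fin n)) (i : Fin n) : |v i| ≤ ‖v‖ := by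
  rw [EuclideanSpace.norm_eq, ← Real.sqrt_sq_eq_abs]
  apply Real.sqrt_le_sqrt
  have : (v i) ^ 2 = ‖v i‖ ^ 2 := by rw [Real.norm_eq_abs, sq_abs]
  rw [this]
  exact Finset.single_le_sum (f := fun j => ‖v j‖ ^ 2) (fun j _ => sq_nonneg _) (Finset.mem_univ i)

lemma inner_toR2 (p : ℤ × ℤ) (ν : EuclideanSpace ℝ (Fin 2)) :
    (inner ℝ (toR2 p) ν : ℝ) = p.1 * ν 0 + p.2 * ν 1 := by
  simp [toR2, PiLp.inner_apply, Fin.sum_univ_two, RCLike.inner_apply, WithLp.equiv_symm_apply]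
  ring

lemma inner_toR2_rot (p : ℤ × ℤ) (ν : EuclideanSpace ℝ (Fin 2)) :
    (inner ℝ (toR2 p) (rotDir ν) : ℝ) = -(p.1 * ν 1) + p.2 * ν 0 := by
  simp [toR2, rotDir, PiLp.inner_apply, Fin.sum_univ_two, RCLike.inner_apply,
    WithLp.equiv_symm_apply]
  ring

lemma nu_sq (ν : EuclideanSpace ℝ (Fin 2)) (hν : ‖ν‖ = 1) : ν 0 ^ 2 + ν 1 ^ 2 = 1 := by
  have h1 := EuclideanSpace.norm_eq ν
  rw [hν] at h1
  have h2 : Real.sqrt (∑ i, ‖ν i‖ ^ 2) = 1 := h1.symm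
  rw [Real.sqrt_eq_one] at h2
  simpa [Fin.sum_univ_two, sq_abs] using h2

lemma coord_bd (ν : EuclideanSpace ℝ (Fin 2)) (hν : ‖ν‖ = 1) (t : ℝ) (p : ℤ × ℤ)
    (hp : toR2 p ∈ sqQ ν t) : |(p.1 : ℝ)| ≤ t ∧ |(p.2 : ℝ)| ≤ t := by
  obtain ⟨ha, hb⟩ := hp
  rw [inner_toR2] at ha
  rw [inner_toR2_rot] at hb
  have hsq := nu_sq ν hν
  have h0 : |ν 0| ≤ 1 := by
    rw [abs_le]; constructor <;> nlinarith [sq_nonneg (ν 1)]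
  have h1 : |ν 1| ≤ 1 := by
    rw [abs_le]; constructor <;> nlinarith [sq_nonneg (ν 0)]
  set a := (p.1 : ℝ) * ν 0 + p.2 * ν 1 with hadef
  set b := -((p.1 : ℝ) * ν 1) + p.2 * ν 0 with hbdef
  constructor
  · have hp1 : (p.1 : ℝ) = a * ν 0 - b * ν 1 := by
      rw [hadef, hbdef]; linear_combination (-(p.1:ℝ)) * hsq
    rw [hp1]
    calc |a * ν 0 - b * ν 1| ≤ |a * ν 0| + |b * ν 1| := abs_sub _ _
      _ = |a| * |ν 0| + |b| * |ν 1| := by rw [abs_mul, abs_mul]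
      _ ≤ (t/2) * 1 + (t/2) * 1 := by
          apply add_le_add <;> apply mul_le_mul (le_of_lt (by assumption)) (by assumption)
            (abs_nonneg _) (by linarith [abs_nonneg a, abs_nonneg b, ha, hb])
      _ = t := by ring
  · have hp2 : (p.2 : ℝ) = a * ν 1 + b * ν 0 := by
      rw [hadef, hbdef]; linear_combination (-(p.2:ℝ)) * hsq
    rw [hp2]
    calc |a * ν 1 + b * ν 0| ≤ |a * ν 1| + |b * ν 0| := abs_add_le _ _
      _ = |a| * |ν 1| + |b| * |ν 0| := by rw [abs_mul, abs_mul]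
      _ ≤ (t/2) * 1 + (t/2) * 1 := by
          apply add_le_add <;> apply mul_le_mul (le_of_lt (by assumption)) (by assumption)
            (abs_nonneg _) (by linarith [abs_nonneg a, abs_nonneg b, ha, hb])
      _ = t := by ring

lemma Eslab_lt_top (c : EuclideanSpace ℝ (Fin 3) → ℝ) (Cbar : ℝ) (hCbar : 0 ≤ Cbar)
    (hc_bd : ∀ z, c z ≤ Cbar) (hc_nonneg : ∀ z, 0 ≤ c z)
    (ν : EuclideanSpace ℝ (Fin 2)) (hν : ‖ν‖ = 1) (N M : ℤ) (t : ℝ)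
    (u : ℤ × ℤ × ℤ → ℝ) (hu : ∀ x, |u x| ≤ 1) :
    Eslab c N M u (sqQ ν t) < ⊤ := by
  classical
  set T : ℤ := ⌈t⌉ with hT
  set B : Finset (ℤ × ℤ × ℤ) :=
    Finset.Icc (-T) T ×ˢ Finset.Icc (-T) T ×ˢ Finset.Icc N M with hB
  have hmem : ∀ x : ℤ × ℤ × ℤ, toR2 (P2z x) ∈ sqQ ν t → N ≤ x.2.2 → x.2.2 ≤ M → x ∈ B := by
    intro x hx hN hM
    obtain ⟨h1, h2⟩ := coord_bd ν hν t (P2z x) hx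
    have ht1 : |x.1| ≤ T := by
      have : |(x.1 : ℝ)| ≤ (T : ℝ) := h1.trans (Int.le_ceil t)
      rw [← Int.cast_abs] at this; exact_mod_cast this
    have ht3 : |x.2.1| ≤ T := by
      have : |(x.2.1 : ℝ)| ≤ (T : ℝ) := h2.trans (Int.le_ceil t)
      rw [← Int.cast_abs] at this; exact_mod_cast this
    rw [abs_le] at ht1 ht3
    simp only [hB, Finset.mem_product, Finset.mem_Icc]
    exact ⟨⟨ht1.1, ht1.2⟩, ⟨ht3.1, ht3.2⟩, hN, hM⟩
  set f : (ℤ × ℤ × ℤ) → (ℤ × ℤ × ℤ) → ℝ≥0∞ := fun x y =>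
    if N ≤ x.2.2 ∧ x.2.2 ≤ M ∧ N ≤ y.2.2 ∧ y.2.2 ≤ M ∧
        toR2 (P2z x) ∈ sqQ ν t ∧ toR2 (P2z y) ∈ sqQ ν t then
      ENNReal.ofReal (c (toR3 x - toR3 y) * |u x - u y|) else 0 with hf
  have hfB : ∀ x y, x ∉ B ∨ y ∉ B → f x y = 0 := by
    intro x y hxy
    refine if_neg ?_
    rintro ⟨c1, c2, c3, c4, c5, c6⟩
    rcases hxy with h | h
    · exact h (hmem x c5 c1 c2)
    · exact h (hmem y c6 c3 c4)
  have hfle : ∀ x y, f x y ≤ ENNReal.ofReal (Cbar * 2) := by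
    intro x y
    show (if N ≤ x.2.2 ∧ x.2.2 ≤ M ∧ N ≤ y.2.2 ∧ y.2.2 ≤ M ∧
        toR2 (P2z x) ∈ sqQ ν t ∧ toR2 (P2z y) ∈ sqQ ν t then
      ENNReal.ofReal (c (toR3 x - toR3 y) * |u x - u y|) else 0) ≤ ENNReal.ofReal (Cbar * 2)
    split
    · apply ENNReal.ofReal_le_ofReal
      have h2 : |u x - u y| ≤ 2 := by
        calc |u x - u y| ≤ |u x| + |u y| := abs_sub _ _
          _ ≤ 2 := by linarith [hu x, hu y]
      exact mul_le_mul (hc_bd _) h2 (abs_nonneg _) hCbar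
    · exact zero_le
  have hstep : Eslab c N M u (sqQ ν t) = ∑ x ∈ B, ∑' y, f x y := by
    unfold Eslab
    exact tsum_eq_sum (fun x hx => by
      have : ∀ y, f x y = 0 := fun y => hfB x y (Or.inl hx)
      simp only [hf] at this
      simp [this])
  rw [hstep]
  have hinner : ∀ x, (∑' y, f x y) ≤ ∑ y ∈ B, ENNReal.ofReal (Cbar * 2) := by
    intro x
    rw [tsum_eq_sum (s := B) (fun y hy => hfB x y (Or.inr hy))]
    exact Finset.sum_le_sum fun y _ => hfle x y
  have : ∑ x ∈ B, ∑' y, f x y ≤ ∑ x ∈ B, ∑ y ∈ B, ENNReal.ofReal (Cbar * 2) :=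
    Finset.sum_le_sum fun x _ => hinner x
  refine lt_of_le_of_lt this ?_
  refine ENNReal.sum_lt_top.2 fun x _ => ?_
  exact ENNReal.sum_lt_top.2 fun y _ => ENNReal.ofReal_lt_top

lemma BC_u0 (L : ℝ) (ν : EuclideanSpace ℝ (Fin 2)) (t : ℝ) :
    BCslab L ν t (fun x => u0 ν (toR2 (P2z x))) := by
  refine ⟨fun x => ?_, fun x _ => rfl⟩
  show (if 0 ≤ (inner ℝ (toR2 (P2z x)) ν : ℝ) then (1:ℝ) else -1) = 1 ∨
    (if 0 ≤ (inner ℝ (toR2 (P2z x)) ν : ℝ) then (1:ℝ) else -1) = -1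
  split
  · left; rfl
  · right; rfl

lemma u0_abs_le (ν : EuclideanSpace ℝ (Fin 2)) (x : EuclideanSpace ℝ (Fin 2)) :
    |u0 ν x| ≤ 1 := by
  unfold u0; split <;> simp

lemma iInf_ne_top (c : EuclideanSpace ℝ (Fin 3) → ℝ) (Cbar L : ℝ) (hCbar : 0 ≤ Cbar)
    (hc_bd : ∀ z, c z ≤ Cbar) (hc_nonneg : ∀ z, 0 ≤ c z)
    (ν : EuclideanSpace ℝ (Fin 2)) (hν : ‖ν‖ = 1) (N M : ℤ) (t : ℝ) :
    (⨅ u : {u : ℤ × ℤ × ℤ → ℝ // BCslab L ν t u}, Eslab c N M u (sqQ ν t)) ≠ ⊤ := by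
  apply ne_top_of_le_ne_top (b := Eslab c N M (fun x => u0 ν (toR2 (P2z x))) (sqQ ν t))
  · exact (Eslab_lt_top c Cbar hCbar hc_bd hc_nonneg ν hν N M t _
      (fun x => u0_abs_le ν _)).ne
  · exact iInf_le (fun u : {u : ℤ × ℤ × ℤ → ℝ // BCslab L ν t u} =>
      Eslab c N M u (sqQ ν t)) ⟨_, BC_u0 L ν t⟩

-- ===================== Part D : upper bound for the u0 competitor ==============

lemma nu_abs_le (ν : EuclideanSpace ℝ (Fin 2)) (hν : ‖ν‖ = 1) (i : Fin 2) : |ν i| ≤ 1 := by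
  have := comp_le_norm ν i
  rw [hν] at this; exact this

lemma mem_box (ν : EuclideanSpace ℝ (Fin 2)) (hν : ‖ν‖ = 1) (N M : ℤ) (t : ℝ)
    (x : ℤ × ℤ × ℤ) (hx : toR2 (P2z x) ∈ sqQ ν t) (h1 : N ≤ x.2.2) (h2 : x.2.2 ≤ M) :
    x ∈ Finset.Icc (-⌈t⌉) ⌈t⌉ ×ˢ Finset.Icc (-⌈t⌉) ⌈t⌉ ×ˢ Finset.Icc N M := by
  obtain ⟨hb1, hb2⟩ := coord_bd ν hν t (P2z x) hx
  have ht1 : |x.1| ≤ ⌈t⌉ := by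
    have : |(x.1 : ℝ)| ≤ (⌈t⌉ : ℝ) := hb1.trans (Int.le_ceil t)
    rw [← Int.cast_abs] at this; exact_mod_cast this
  have ht3 : |x.2.1| ≤ ⌈t⌉ := by
    have : |(x.2.1 : ℝ)| ≤ (⌈t⌉ : ℝ) := hb2.trans (Int.le_ceil t)
    rw [← Int.cast_abs] at this; exact_mod_cast this
  rw [abs_le] at ht1 ht3
  simp only [Finset.mem_product, Finset.mem_Icc]
  exact ⟨⟨ht1.1, ht1.2⟩, ⟨ht3.1, ht3.2⟩, h1, h2⟩

/-- integers `i` with `|i ν₀ + w| ≤ 2L` (with `ν₀² ≥ 1/2`) form a set of size `≤ ⌈6L⌉ + 1`. -/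
lemma line_card (L w ν0 : ℝ) (hL : 0 < L) (hnu : 1 ≤ 2 * ν0 ^ 2) (s : Finset ℤ)
    (hs : ∀ i ∈ s, |(i : ℝ) * ν0 + w| ≤ 2 * L) : s.card ≤ ⌈6 * L⌉.toNat + 1 := by
  rcases s.eq_empty_or_nonempty with rfl | hne
  · simp
  have hdiam : ∀ i ∈ s, ∀ j ∈ s, (i : ℝ) - j ≤ 6 * L := by
    intro i hi j hj
    have h1 := hs i hi
    have h2 := hs j hj
    have habs : |((i : ℝ) - j) * ν0| ≤ 4 * L := by
      have heq : ((i:ℝ) - j) * ν0 = ((i:ℝ)*ν0 + w) - ((j:ℝ)*ν0 + w) := by ring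
      rw [heq]
      calc |((i:ℝ)*ν0 + w) - ((j:ℝ)*ν0 + w)|
          ≤ |(i:ℝ)*ν0 + w| + |(j:ℝ)*ν0 + w| := abs_sub _ _
        _ ≤ 4*L := by linarith
    have h3 : (((i:ℝ)-j) * ν0)^2 ≤ (4*L)^2 := by
      nlinarith [sq_abs (((i:ℝ)-j) * ν0), abs_nonneg (((i:ℝ)-j) * ν0)]
    have hsq : ((i:ℝ)-j)^2 ≤ (6*L)^2 := by
      nlinarith [sq_nonneg ((i:ℝ)-j), sq_nonneg L]
    nlinarith [hsq, hL]
  set m := s.min' hne with hm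
  have hsub : s ⊆ Finset.Icc m (m + ⌈6*L⌉) := by
    intro i hi
    rw [Finset.mem_Icc]
    refine ⟨Finset.min'_le s i hi, ?_⟩
    have h1 : (i:ℝ) - m ≤ 6*L := hdiam i hi m (s.min'_mem hne)
    have h2 : (i:ℝ) ≤ m + ⌈6*L⌉ := by nlinarith [Int.le_ceil (6*L)]
    exact_mod_cast h2
  calc s.card ≤ (Finset.Icc m (m + ⌈6*L⌉)).card := Finset.card_le_card hsub
    _ = (m + ⌈6*L⌉ + 1 - m).toNat := Int.card_Icc _ _
    _ = (⌈6*L⌉ + 1).toNat := by congr 1; ring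
    _ ≤ ⌈6*L⌉.toNat + 1 := by omega

lemma toR3_sub_apply0 (x y : ℤ × ℤ × ℤ) : (toR3 x - toR3 y) 0 = (x.1 : ℝ) - y.1 := by
  simp [toR3, WithLp.equiv_symm_apply]
lemma toR3_sub_apply1 (x y : ℤ × ℤ × ℤ) : (toR3 x - toR3 y) 1 = (x.2.1 : ℝ) - y.2.1 := by
  simp [toR3, WithLp.equiv_symm_apply]
lemma toR3_sub_apply2 (x y : ℤ × ℤ × ℤ) : (toR3 x - toR3 y) 2 = (x.2.2 : ℝ) - y.2.2 := by
  simp [toR3, WithLp.equiv_symm_apply]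

lemma toNat_cast_real (a : ℤ) (h : 0 ≤ a) : ((a.toNat : ℕ) : ℝ) = (a : ℝ) := by
  exact_mod_cast congrArg (fun z : ℤ => (z : ℝ)) (Int.toNat_of_nonneg h)

set_option maxHeartbeats 1000000 in
lemma Eslab_u0_bd (c : EuclideanSpace ℝ (Fin 3) → ℝ) (L Cbar : ℝ) (hL : 0 < L)
    (hCbar : 0 ≤ Cbar) (hc_bd : ∀ z, c z ≤ Cbar) (hc_nonneg : ∀ z, 0 ≤ c z)
    (hc_range : ∀ z, L ≤ ‖z‖ → c z = 0)
    (ν : EuclideanSpace ℝ (Fin 2)) (hν : ‖ν‖ = 1) (M : ℤ) (hM : 0 ≤ M)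
    (t : ℝ) (ht : 0 < t) :
    Eslab c 0 M (fun x => u0 ν (toR2 (P2z x))) (sqQ ν t) ≤
      ENNReal.ofReal ((Cbar * 2 * (2*L+3)^3 * (6*L+2)) * ((M:ℝ)+1) * (2*t+3)) := by
  classical
  set w : (ℤ × ℤ × ℤ) → ℝ := fun x => u0 ν (toR2 (P2z x)) with hw
  set T : ℤ := ⌈t⌉ with hT
  set S : ℤ := ⌈L⌉ with hS
  set B : Finset (ℤ × ℤ × ℤ) :=
    Finset.Icc (-T) T ×ˢ Finset.Icc (-T) T ×ˢ Finset.Icc 0 M with hB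
  set Strip : Finset (ℤ × ℤ × ℤ) :=
    B.filter (fun x => |(x.1:ℝ) * ν 0 + (x.2.1:ℝ) * ν 1| ≤ 2*L) with hStrip
  set nb : (ℤ × ℤ × ℤ) → Finset (ℤ × ℤ × ℤ) := fun x =>
    Finset.Icc (x.1 - S) (x.1 + S) ×ˢ Finset.Icc (x.2.1 - S) (x.2.1 + S) ×ˢ
      Finset.Icc (x.2.2 - S) (x.2.2 + S) with hnb
  set term : (ℤ × ℤ × ℤ) → (ℤ × ℤ × ℤ) → ℝ≥0∞ := fun x y =>
    if 0 ≤ x.2.2 ∧ x.2.2 ≤ M ∧ 0 ≤ y.2.2 ∧ y.2.2 ≤ M ∧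
        toR2 (P2z x) ∈ sqQ ν t ∧ toR2 (P2z y) ∈ sqQ ν t then
      ENNReal.ofReal (c (toR3 x - toR3 y) * |w x - w y|) else 0 with hterm
  -- the key support analysis
  have hkey : ∀ x y : ℤ × ℤ × ℤ, term x y ≠ 0 → x ∈ Strip ∧ y ∈ nb x := by
    intro x y h
    have hcond : 0 ≤ x.2.2 ∧ x.2.2 ≤ M ∧ 0 ≤ y.2.2 ∧ y.2.2 ≤ M ∧
        toR2 (P2z x) ∈ sqQ ν t ∧ toR2 (P2z y) ∈ sqQ ν t := by
      by_contra hc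
      exact h (if_neg hc)
    have hval : 0 < c (toR3 x - toR3 y) * |w x - w y| := by
      by_contra hle
      push_neg at hle
      refine h ?_
      show (if 0 ≤ x.2.2 ∧ x.2.2 ≤ M ∧ 0 ≤ y.2.2 ∧ y.2.2 ≤ M ∧
          toR2 (P2z x) ∈ sqQ ν t ∧ toR2 (P2z y) ∈ sqQ ν t then
        ENNReal.ofReal (c (toR3 x - toR3 y) * |w x - w y|) else 0) = 0
      rw [if_pos hcond]
      exact ENNReal.ofReal_eq_zero.2 hle
    have hcd : c (toR3 x - toR3 y) ≠ 0 := by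
      intro h0; rw [h0, zero_mul] at hval; exact lt_irrefl _ hval
    have hab : w x ≠ w y := by
      intro h0
      rw [h0, sub_self, abs_zero, mul_zero] at hval
      exact lt_irrefl _ hval
    have hdn : ‖toR3 x - toR3 y‖ < L := by
      by_contra hge
      push_neg at hge
      exact hcd (hc_range _ hge)
    have hd0 : |(x.1 : ℝ) - y.1| < L := by
      have := comp_le_norm (toR3 x - toR3 y) 0
      rw [toR3_sub_apply0] at this; linarith
    have hd1 : |(x.2.1 : ℝ) - y.2.1| < L := by
      have := comp_le_norm (toR3 x - toR3 y) 1
      rw [toR3_sub_apply1] at this; linarith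
    have hd2 : |(x.2.2 : ℝ) - y.2.2| < L := by
      have := comp_le_norm (toR3 x - toR3 y) 2
      rw [toR3_sub_apply2] at this; linarith
    -- y ∈ nb x
    have hy : y ∈ nb x := by
      have e0 : |x.1 - y.1| ≤ S := by
        have : |((x.1 - y.1 : ℤ) : ℝ)| ≤ (S : ℝ) := by
          push_cast; exact le_trans (le_of_lt hd0) (Int.le_ceil L)
        rw [← Int.cast_abs] at this; exact_mod_cast this
      have e1 : |x.2.1 - y.2.1| ≤ S := by
        have : |((x.2.1 - y.2.1 : ℤ) : ℝ)| ≤ (S : ℝ) := by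
          push_cast; exact le_trans (le_of_lt hd1) (Int.le_ceil L)
        rw [← Int.cast_abs] at this; exact_mod_cast this
      have e2 : |x.2.2 - y.2.2| ≤ S := by
        have : |((x.2.2 - y.2.2 : ℤ) : ℝ)| ≤ (S : ℝ) := by
          push_cast; exact le_trans (le_of_lt hd2) (Int.le_ceil L)
        rw [← Int.cast_abs] at this; exact_mod_cast this
      rw [abs_le] at e0 e1 e2
      simp only [hnb, Finset.mem_product, Finset.mem_Icc]
      omega
    -- x ∈ Strip
    set ax : ℝ := (x.1:ℝ) * ν 0 + (x.2.1:ℝ) * ν 1 with hax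
    set ay : ℝ := (y.1:ℝ) * ν 0 + (y.2.1:ℝ) * ν 1 with hay
    have hwx : w x = if 0 ≤ ax then (1:ℝ) else -1 := by
      rw [hw]; show u0 ν (toR2 (P2z x)) = _
      unfold u0; rw [inner_toR2]; rfl
    have hwy : w y = if 0 ≤ ay then (1:ℝ) else -1 := by
      rw [hw]; show u0 ν (toR2 (P2z y)) = _
      unfold u0; rw [inner_toR2]; rfl
    have hdiff : |ax - ay| ≤ 2 * L := by
      have heq : ax - ay = ((x.1:ℝ) - y.1) * ν 0 + ((x.2.1:ℝ) - y.2.1) * ν 1 := by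
        rw [hax, hay]; ring
      rw [heq]
      calc |((x.1:ℝ) - y.1) * ν 0 + ((x.2.1:ℝ) - y.2.1) * ν 1|
          ≤ |((x.1:ℝ) - y.1) * ν 0| + |((x.2.1:ℝ) - y.2.1) * ν 1| := abs_add_le _ _
        _ = |(x.1:ℝ) - y.1| * |ν 0| + |(x.2.1:ℝ) - y.2.1| * |ν 1| := by
            rw [abs_mul, abs_mul]
        _ ≤ L * 1 + L * 1 := by
            apply add_le_add <;>
              exact mul_le_mul (le_of_lt (by assumption)) (nu_abs_le ν hν _)
                (abs_nonneg _) hL.le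
        _ = 2 * L := by ring
    have hmax : |ax| ≤ 2 * L := by
      rw [abs_le] at hdiff ⊢
      rcases le_or_gt 0 ax with h1 | h1 <;> rcases le_or_gt 0 ay with h2 | h2
      · exact absurd (by rw [hwx, hwy, if_pos h1, if_pos h2]) hab
      · constructor <;> linarith
      · constructor <;> linarith
      · exact absurd (by rw [hwx, hwy, if_neg (not_le.2 h1), if_neg (not_le.2 h2)]) hab
    refine ⟨?_, hy⟩
    rw [hStrip, Finset.mem_filter]
    exact ⟨mem_box ν hν 0 M t x hcond.2.2.2.2.1 hcond.1 hcond.2.1, hmax⟩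
  -- pointwise bound on terms
  have hterm_le : ∀ x y, term x y ≤ ENNReal.ofReal (Cbar * 2) := by
    intro x y
    show (if 0 ≤ x.2.2 ∧ x.2.2 ≤ M ∧ 0 ≤ y.2.2 ∧ y.2.2 ≤ M ∧
        toR2 (P2z x) ∈ sqQ ν t ∧ toR2 (P2z y) ∈ sqQ ν t then
      ENNReal.ofReal (c (toR3 x - toR3 y) * |w x - w y|) else 0) ≤ ENNReal.ofReal (Cbar * 2)
    split
    · apply ENNReal.ofReal_le_ofReal
      have hx2 : |w x| ≤ 1 := u0_abs_le ν (toR2 (P2z x))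
      have hy2 : |w y| ≤ 1 := u0_abs_le ν (toR2 (P2z y))
      have h2 : |w x - w y| ≤ 2 := by
        calc |w x - w y| ≤ |w x| + |w y| := abs_sub _ _
          _ ≤ 2 := by linarith
      exact mul_le_mul (hc_bd _) h2 (abs_nonneg _) hCbar
    · exact zero_le
  -- rewrite Eslab as a finite sum over the strip
  have hE : Eslab c 0 M w (sqQ ν t) = ∑ x ∈ Strip, ∑' y, term x y := by
    have h0 : Eslab c 0 M w (sqQ ν t) = ∑' x, ∑' y, term x y := rfl
    rw [h0]
    refine tsum_eq_sum fun x hx => ?_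
    have hz : ∀ y, term x y = 0 := fun y => by
      by_contra hne; exact hx (hkey x y hne).1
    simp [hz]
  -- the inner sums
  have hinner : ∀ x, (∑' y, term x y) ≤ (nb x).card • ENNReal.ofReal (Cbar * 2) := by
    intro x
    rw [tsum_eq_sum (s := nb x) (fun y hy => by
      by_contra hne; exact hy (hkey x y hne).2)]
    calc ∑ y ∈ nb x, term x y ≤ ∑ _y ∈ nb x, ENNReal.ofReal (Cbar*2) :=
        Finset.sum_le_sum fun y _ => hterm_le x y
      _ = (nb x).card • ENNReal.ofReal (Cbar * 2) := Finset.sum_const _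
  -- cardinality of the neighborhoods
  have hS1 : (1 : ℤ) ≤ S := by
    rw [hS]; exact_mod_cast Int.le_ceil_iff.2 (by norm_num; linarith)
  have hSreal : (S : ℝ) ≤ L + 1 := (Int.ceil_lt_add_one L).le
  have hcard_nb : ∀ x, ((nb x).card : ℝ) ≤ (2*L+3)^3 := by
    intro x
    have h1 : (nb x).card = ((2*S+1).toNat)^3 := by
      show (Finset.Icc (x.1 - S) (x.1 + S) ×ˢ Finset.Icc (x.2.1 - S) (x.2.1 + S) ×ˢ
        Finset.Icc (x.2.2 - S) (x.2.2 + S)).card = _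
      rw [Finset.card_product, Finset.card_product, Int.card_Icc, Int.card_Icc, Int.card_Icc]
      have e1 : x.1 + S + 1 - (x.1 - S) = 2*S+1 := by ring
      have e2 : x.2.1 + S + 1 - (x.2.1 - S) = 2*S+1 := by ring
      have e3 : x.2.2 + S + 1 - (x.2.2 - S) = 2*S+1 := by ring
      rw [e1, e2, e3]; ring
    rw [h1]
    have h3 : (((2*S+1).toNat : ℕ) : ℝ) ≤ 2*L+3 := by
      rw [toNat_cast_real _ (by linarith [hS1])]; push_cast; linarith
    calc ((((2*S+1).toNat)^3 : ℕ) : ℝ) = (((2*S+1).toNat : ℕ) : ℝ)^3 := by push_cast; ring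
      _ ≤ (2*L+3)^3 := pow_le_pow_left₀ (by positivity) h3 3
  -- cardinality of the strip
  have hsq := nu_sq ν hν
  have hT1 : (1 : ℤ) ≤ T := by
    rw [hT]; exact_mod_cast Int.le_ceil_iff.2 (by norm_num; linarith)
  have hTreal : (T : ℝ) ≤ t + 1 := (Int.ceil_lt_add_one t).le
  set tset : Finset (ℤ × ℤ) := Finset.Icc (-T) T ×ˢ Finset.Icc 0 M with htset
  have htset_card : ((tset.card : ℕ) : ℝ) ≤ (2*t+3) * ((M:ℝ)+1) := by
    have h1 : tset.card = ((2*T+1).toNat) * ((M+1).toNat) := by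
      rw [htset, Finset.card_product, Int.card_Icc, Int.card_Icc]
      congr 1
      · congr 1; ring
      · congr 1; ring
    rw [h1]
    have hM0 : (0:ℝ) ≤ (M:ℝ) := by exact_mod_cast hM
    calc (((2*T+1).toNat * (M+1).toNat : ℕ) : ℝ)
        = (((2*T+1).toNat : ℕ) : ℝ) * (((M+1).toNat : ℕ) : ℝ) := by push_cast; ring
      _ = ((2*T+1 : ℤ) : ℝ) * ((M+1 : ℤ) : ℝ) := by
          rw [toNat_cast_real _ (by linarith [hT1]), toNat_cast_real _ (by linarith [hM])]
      _ ≤ (2*t+3) * ((M:ℝ)+1) := by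
          push_cast
          apply mul_le_mul (by linarith) (by linarith) (by linarith) (by linarith)
  have hnum : ∀ b : ℤ, ∀ ν' w' : ℝ, 1 ≤ 2 * ν'^2 →
      ∀ s : Finset ℤ, (∀ i ∈ s, |(i:ℝ) * ν' + w'| ≤ 2*L) → s.card ≤ ⌈6*L⌉.toNat + 1 :=
    fun b ν' w' hn s hs => line_card L w' ν' hL hn s hs
  have hcard_strip : ((Strip.card : ℕ) : ℝ) ≤ (6*L+2) * ((2*t+3) * ((M:ℝ)+1)) := by
    have hfib : Strip.card ≤ (⌈6*L⌉.toNat + 1) * tset.card := by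
      rcases le_total (|ν 1|) (|ν 0|) with hc | hc
      · -- ν 0 dominates : fibre over (x.2.1, x.2.2)
        have hnu : 1 ≤ 2 * (ν 0)^2 := by
          nlinarith [sq_abs (ν 0), sq_abs (ν 1), abs_nonneg (ν 0), abs_nonneg (ν 1)]
        refine Finset.card_le_mul_card_image_of_maps_to
          (f := fun x : ℤ × ℤ × ℤ => (x.2.1, x.2.2)) (t := tset) ?_ _ ?_
        · intro x hx
          rw [hStrip, Finset.mem_filter, hB] at hx
          obtain ⟨hxB, -⟩ := hx
          rw [Finset.mem_product] at hxB
          exact hxB.2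
        · intro b hb
          set fib := Finset.filter (fun x : ℤ × ℤ × ℤ => (x.2.1, x.2.2) = b) Strip with hfibd
          have hinj : Set.InjOn (fun x : ℤ × ℤ × ℤ => x.1) fib := by
            intro p hp q hq hpq
            simp only [hfibd, Finset.coe_filter, Set.mem_setOf_eq] at hp hq
            have : p.2 = q.2 := by
              rw [Prod.ext_iff] at hp hq ⊢
              obtain ⟨h1, h2⟩ := hp.2
              obtain ⟨h3, h4⟩ := hq.2
              exact ⟨h1.trans h3.symm, h2.trans h4.symm⟩
            exact Prod.ext hpq this
          rw [← Finset.card_image_of_injOn hinj]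
          refine line_card L ((b.1:ℝ) * ν 1) (ν 0) hL hnu _ ?_
          intro i hi
          rw [Finset.mem_image] at hi
          obtain ⟨x, hx, rfl⟩ := hi
          rw [hfibd, Finset.mem_filter] at hx
          obtain ⟨hxS, hxb⟩ := hx
          rw [hStrip, Finset.mem_filter] at hxS
          have h21 : x.2.1 = b.1 := by rw [← hxb]
          have := hxS.2
          rw [h21] at this
          exact this
      · -- ν 1 dominates : fibre over (x.1, x.2.2)
        have hnu : 1 ≤ 2 * (ν 1)^2 := by
          nlinarith [sq_abs (ν 0), sq_abs (ν 1), abs_nonneg (ν 0), abs_nonneg (ν 1)]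
        refine Finset.card_le_mul_card_image_of_maps_to
          (f := fun x : ℤ × ℤ × ℤ => (x.1, x.2.2)) (t := tset) ?_ _ ?_
        · intro x hx
          rw [hStrip, Finset.mem_filter, hB] at hx
          obtain ⟨hxB, -⟩ := hx
          rw [Finset.mem_product] at hxB
          obtain ⟨h1, h2⟩ := hxB
          rw [htset, Finset.mem_product] at h2 ⊢
          exact ⟨h1, h2.2⟩
        · intro b hb
          set fib := Finset.filter (fun x : ℤ × ℤ × ℤ => (x.1, x.2.2) = b) Strip with hfibd
          have hinj : Set.InjOn (fun x : ℤ × ℤ × ℤ => x.2.1) fib := by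
            intro p hp q hq hpq
            simp only [hfibd, Finset.coe_filter, Set.mem_setOf_eq] at hp hq
            rw [Prod.ext_iff] at hp hq
            obtain ⟨h1, h2⟩ := hp.2
            obtain ⟨h3, h4⟩ := hq.2
            exact Prod.ext (h1.trans h3.symm) (Prod.ext hpq (h2.trans h4.symm))
          rw [← Finset.card_image_of_injOn hinj]
          refine line_card L ((b.1:ℝ) * ν 0) (ν 1) hL hnu _ ?_
          intro i hi
          rw [Finset.mem_image] at hi
          obtain ⟨x, hx, rfl⟩ := hi
          rw [hfibd, Finset.mem_filter] at hx
          obtain ⟨hxS, hxb⟩ := hx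
          rw [hStrip, Finset.mem_filter] at hxS
          have h21 : x.1 = b.1 := by rw [← hxb]
          have habs := hxS.2
          rw [h21] at habs
          calc |(x.2.1:ℝ) * ν 1 + (b.1:ℝ) * ν 0|
              = |(b.1:ℝ) * ν 0 + (x.2.1:ℝ) * ν 1| := by rw [add_comm]
            _ ≤ 2 * L := habs
    have h6 : ((⌈6*L⌉.toNat + 1 : ℕ) : ℝ) ≤ 6*L+2 := by
      have : (⌈6*L⌉.toNat : ℤ) = ⌈6*L⌉ := Int.toNat_of_nonneg (by positivity)
      have h7 : ((⌈6*L⌉.toNat : ℕ) : ℝ) = ((⌈6*L⌉ : ℤ) : ℝ) := by exact_mod_cast congrArg Int.cast this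
      push_cast
      rw [h7]
      have := (Int.ceil_lt_add_one (6*L)).le
      linarith
    calc ((Strip.card : ℕ) : ℝ) ≤ (((⌈6*L⌉.toNat + 1) * tset.card : ℕ) : ℝ) := by
          exact_mod_cast hfib
      _ = ((⌈6*L⌉.toNat + 1 : ℕ) : ℝ) * ((tset.card : ℕ) : ℝ) := by push_cast; ring
      _ ≤ (6*L+2) * ((2*t+3) * ((M:ℝ)+1)) := by
          have hM0 : (0:ℝ) ≤ (M:ℝ) := by exact_mod_cast hM
          apply mul_le_mul h6 htset_card (Nat.cast_nonneg _) (by linarith)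
  -- put everything together
  have hKnn : (0:ℝ) ≤ (2*L+3)^3 * (Cbar*2) := by
    apply mul_nonneg (by positivity) (by linarith)
  calc Eslab c 0 M w (sqQ ν t) = ∑ x ∈ Strip, ∑' y, term x y := hE
    _ ≤ ∑ x ∈ Strip, ENNReal.ofReal ((2*L+3)^3 * (Cbar*2)) := by
        refine Finset.sum_le_sum fun x _ => le_trans (hinner x) ?_
        rw [nsmul_eq_mul, ← ENNReal.ofReal_natCast, ← ENNReal.ofReal_mul (Nat.cast_nonneg _)]
        apply ENNReal.ofReal_le_ofReal
        apply mul_le_mul (hcard_nb x) le_rfl (by linarith) (by positivity)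
    _ = Strip.card • ENNReal.ofReal ((2*L+3)^3 * (Cbar*2)) := Finset.sum_const _
    _ ≤ ENNReal.ofReal ((Cbar * 2 * (2*L+3)^3 * (6*L+2)) * ((M:ℝ)+1) * (2*t+3)) := by
        rw [nsmul_eq_mul, ← ENNReal.ofReal_natCast, ← ENNReal.ofReal_mul (Nat.cast_nonneg _)]
        apply ENNReal.ofReal_le_ofReal
        calc ((Strip.card : ℕ) : ℝ) * ((2*L+3)^3 * (Cbar*2))
            ≤ ((6*L+2) * ((2*t+3) * ((M:ℝ)+1))) * ((2*L+3)^3 * (Cbar*2)) :=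
              mul_le_mul_of_nonneg_right hcard_strip hKnn
          _ = (Cbar * 2 * (2*L+3)^3 * (6*L+2)) * ((M:ℝ)+1) * (2*t+3) := by ring

-- ===================== Part E : assembling the proof =====================

lemma mSlab_superadd (c : EuclideanSpace ℝ (Fin 3) → ℝ) (L Cbar : ℝ) (hCbar : 0 ≤ Cbar)
    (hc_bd : ∀ z, c z ≤ Cbar) (hc_nonneg : ∀ z, 0 ≤ c z)
    (ν : EuclideanSpace ℝ (Fin 2)) (hν : ‖ν‖ = 1) (M1 M2 : ℤ)
    (h1 : 0 ≤ M1) (h2 : 0 ≤ M2) (t : ℝ) :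
    mSlab c L ν 0 M1 t + mSlab c L ν 0 M2 t ≤ mSlab c L ν 0 (M1 + 1 + M2) t := by
  unfold mSlab
  set I1 := ⨅ u : {u : ℤ × ℤ × ℤ → ℝ // BCslab L ν t u}, Eslab c 0 M1 u (sqQ ν t) with hI1
  set I2 := ⨅ u : {u : ℤ × ℤ × ℤ → ℝ // BCslab L ν t u}, Eslab c 0 M2 u (sqQ ν t) with hI2
  set I := ⨅ u : {u : ℤ × ℤ × ℤ → ℝ // BCslab L ν t u},
    Eslab c 0 (M1 + 1 + M2) u (sqQ ν t) with hI
  have hI2' : I2 = ⨅ u : {u : ℤ × ℤ × ℤ → ℝ // BCslab L ν t u},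
      Eslab c (M1 + 1) (M1 + 1 + M2) u (sqQ ν t) := by
    have h := iInf_shift c L ν t 0 M2 (M1 + 1)
    rw [zero_add, show M2 + (M1 + 1) = M1 + 1 + M2 from by ring] at h
    exact h.symm
  have hsum : I1 + I2 ≤ I := by
    rw [hI2']
    refine le_iInf fun u => ?_
    calc I1 + (⨅ u : {u : ℤ × ℤ × ℤ → ℝ // BCslab L ν t u},
          Eslab c (M1 + 1) (M1 + 1 + M2) u (sqQ ν t))
        ≤ Eslab c 0 M1 u (sqQ ν t) + Eslab c (M1 + 1) (M1 + 1 + M2) u (sqQ ν t) :=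
          add_le_add (iInf_le _ u) (iInf_le _ u)
      _ ≤ Eslab c 0 (M1 + 1 + M2) u (sqQ ν t) := Eslab_superadd c M1 M2 h1 h2 u _
  have hItop : I ≠ ⊤ := iInf_ne_top c Cbar L hCbar hc_bd hc_nonneg ν hν 0 (M1 + 1 + M2) t
  have hI1top : I1 ≠ ⊤ := iInf_ne_top c Cbar L hCbar hc_bd hc_nonneg ν hν 0 M1 t
  have hI2top : I2 ≠ ⊤ := iInf_ne_top c Cbar L hCbar hc_bd hc_nonneg ν hν 0 M2 t
  rw [← ENNReal.toReal_add hI1top hI2top]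
  exact ENNReal.toReal_mono hItop hsum

lemma mSlab_bd (c : EuclideanSpace ℝ (Fin 3) → ℝ) (L Cbar : ℝ) (hL : 0 < L)
    (hCbar : 0 ≤ Cbar) (hc_bd : ∀ z, c z ≤ Cbar) (hc_nonneg : ∀ z, 0 ≤ c z)
    (hc_range : ∀ z, L ≤ ‖z‖ → c z = 0)
    (ν : EuclideanSpace ℝ (Fin 2)) (hν : ‖ν‖ = 1) (M : ℤ) (hM : 0 ≤ M)
    (t : ℝ) (ht : 0 < t) :
    mSlab c L ν 0 M t ≤ (Cbar * 2 * (2*L+3)^3 * (6*L+2)) * ((M:ℝ)+1) * (2*t+3) := by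
  unfold mSlab
  have h1 : (⨅ u : {u : ℤ × ℤ × ℤ → ℝ // BCslab L ν t u}, Eslab c 0 M u (sqQ ν t))
      ≤ ENNReal.ofReal ((Cbar * 2 * (2*L+3)^3 * (6*L+2)) * ((M:ℝ)+1) * (2*t+3)) := by
    refine le_trans ?_ (Eslab_u0_bd c L Cbar hL hCbar hc_bd hc_nonneg hc_range ν hν M hM t ht)
    exact iInf_le (fun u : {u : ℤ × ℤ × ℤ → ℝ // BCslab L ν t u} =>
      Eslab c 0 M u (sqQ ν t)) ⟨_, BC_u0 L ν t⟩
  calc (⨅ u : {u : ℤ × ℤ × ℤ → ℝ // BCslab L ν t u}, Eslab c 0 M u (sqQ ν t)).toReal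
      ≤ (ENNReal.ofReal ((Cbar * 2 * (2*L+3)^3 * (6*L+2)) * ((M:ℝ)+1) * (2*t+3))).toReal :=
        ENNReal.toReal_mono ENNReal.ofReal_ne_top h1
    _ ≤ _ := by
        have hM0 : (0:ℝ) ≤ (M:ℝ) := by exact_mod_cast hM
        rw [ENNReal.toReal_ofReal (by
          apply mul_nonneg (mul_nonneg (mul_nonneg (mul_nonneg (by linarith) (by positivity))
            (by linarith)) (by linarith)) (by linarith))]

/-- **Existence of the surface tension per unit thickness** (Lemma `auxlemma`): if for
every `M` the surface tension `φ^{1,M}(ν) = lim_{t→∞} m_{[0,M]}(u_{0,ν},Q_ν(0,t))/t`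
exists, then `φ¹(ν) = lim_{M→∞} φ^{1,M}(ν)/M` exists (and is finite, being a real limit). -/
theorem surface_tension_per_layer_exists
    (L Cbar c0 : ℝ) (hL : 0 < L) (hCbar : 0 < Cbar) (hc0 : 0 < c0)
    (c : EuclideanSpace ℝ (Fin 3) → ℝ)
    (hc_nonneg : ∀ z, 0 ≤ c z)
    (hc_bd : ∀ z, c z ≤ Cbar)
    (hc_range : ∀ z : EuclideanSpace ℝ (Fin 3), L ≤ ‖z‖ → c z = 0)
    (hc_coer : ∀ z : EuclideanSpace ℝ (Fin 3), ‖z‖ = 1 → c0 ≤ c z)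
    (ν : EuclideanSpace ℝ (Fin 2)) (hν : ‖ν‖ = 1)
    (φ1M : ℕ → ℝ)
    (hφ1M : ∀ M : ℕ, Tendsto (fun t : ℝ => mSlab c L ν 0 (M : ℤ) t / t)
      atTop (nhds (φ1M M))) :
    ∃ φ1 : ℝ, Tendsto (fun M : ℕ => φ1M M / (M : ℝ)) atTop (nhds φ1) := by
  classical
  set K : ℝ := Cbar * 2 * (2*L+3)^3 * (6*L+2) with hK
  have hK0 : 0 ≤ K := by
    rw [hK]
    apply mul_nonneg (mul_nonneg (by linarith) (by positivity)) (by linarith)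
  -- superadditivity at the level of the limits
  have hsuper : ∀ M1 M2 : ℕ, φ1M M1 + φ1M M2 ≤ φ1M (M1 + M2 + 1) := by
    intro M1 M2
    refine le_of_tendsto_of_tendsto ((hφ1M M1).add (hφ1M M2)) (hφ1M (M1 + M2 + 1)) ?_
    filter_upwards [eventually_gt_atTop (0:ℝ)] with t ht
    rw [← add_div]
    rw [div_le_div_iff_of_pos_right ht]
    have := mSlab_superadd c L Cbar hCbar.le hc_bd hc_nonneg ν hν M1 M2
      (by positivity) (by positivity) t
    have e : ((M1 + M2 + 1 : ℕ) : ℤ) = (M1:ℤ) + 1 + M2 := by push_cast; ring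
    rw [e]; exact this
  -- upper bound for φ1M
  have hφbd : ∀ M : ℕ, φ1M M ≤ 3 * K * ((M:ℝ)+1) := by
    intro M
    refine le_of_tendsto (hφ1M M) ?_
    filter_upwards [eventually_ge_atTop (3:ℝ)] with t ht
    have ht0 : (0:ℝ) < t := by linarith
    have hb := mSlab_bd c L Cbar hL hCbar.le hc_bd hc_nonneg hc_range ν hν M
      (by positivity) t ht0
    rw [div_le_iff₀ ht0]
    have hMK : 0 ≤ K * ((M:ℝ)+1) := by positivity
    calc mSlab c L ν 0 (M:ℤ) t ≤ K * ((M:ℝ)+1) * (2*t+3) := hb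
      _ ≤ 3 * K * ((M:ℝ)+1) * t := by nlinarith
  -- nonnegativity of mSlab gives φ1M ≥ 0 — not needed, but boundedness below of v n / n is
  -- the subadditive auxiliary sequence
  set v : ℕ → ℝ := fun n => if n = 0 then 0 else -φ1M (n-1) with hv
  have hsub : Subadditive v := by
    intro m n
    rcases Nat.eq_zero_or_pos m with rfl | hm
    · simp [hv]
    rcases Nat.eq_zero_or_pos n with rfl | hn
    · simp [hv]
    have hmn : m + n ≠ 0 := by omega
    rw [hv]
    simp only [if_neg hmn, if_neg (by omega : m ≠ 0), if_neg (by omega : n ≠ 0)]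
    have h := hsuper (m-1) (n-1)
    have he : (m-1) + (n-1) + 1 = m + n - 1 := by omega
    rw [he] at h
    linarith
  have hbdd : BddBelow (Set.range fun n : ℕ => v n / n) := by
    refine ⟨-(3*K), ?_⟩
    rintro r ⟨n, rfl⟩
    rcases Nat.eq_zero_or_pos n with rfl | hn
    · simp [hv]; positivity
    obtain ⟨m, rfl⟩ := Nat.exists_eq_succ_of_ne_zero (by omega : n ≠ 0)
    simp only [hv, if_neg (Nat.succ_ne_zero m), Nat.succ_sub_one]
    have hb := hφbd m
    have hpos : (0:ℝ) < (m+1 : ℕ) := by positivity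
    rw [neg_div, le_neg, neg_neg, div_le_iff₀ hpos]
    calc φ1M m ≤ 3 * K * ((m:ℝ)+1) := hb
      _ = 3 * K * ((m+1 : ℕ) : ℝ) := by push_cast; ring
  refine ⟨-hsub.lim, ?_⟩
  have hlim := hsub.tendsto_lim hbdd
  -- v (M+1) / (M+1) → lim
  have hlim2 : Tendsto (fun M : ℕ => v (M+1) / ((M+1 : ℕ) : ℝ)) atTop (nhds hsub.lim) :=
    (tendsto_add_atTop_iff_nat 1).2 hlim
  -- (M+1)/M → 1
  have hquot : Tendsto (fun M : ℕ => -(((M:ℝ)+1) / (M:ℝ))) atTop (nhds (-1)) := by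
    apply Tendsto.neg
    have h1 : Tendsto (fun M : ℕ => 1 + 1/(M:ℝ)) atTop (nhds 1) := by
      have := tendsto_one_div_atTop_nhds_zero_nat (𝕜 := ℝ)
      simpa using tendsto_const_nhds.add this
    refine h1.congr' ?_
    filter_upwards [eventually_gt_atTop 0] with M hM
    have hM0 : (M:ℝ) ≠ 0 := by positivity
    field_simp
  have hmul : Tendsto (fun M : ℕ => (v (M+1) / ((M+1 : ℕ) : ℝ)) * (-(((M:ℝ)+1) / (M:ℝ))))
      atTop (nhds (-hsub.lim)) := by
    have := hlim2.mul hquot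
    simpa using this
  refine hmul.congr' ?_
  filter_upwards [eventually_gt_atTop 0] with M hM
  have hM0 : (M:ℝ) ≠ 0 := by positivity
  have hM1 : ((M+1 : ℕ) : ℝ) ≠ 0 := by positivity
  have hveq : v (M+1) = -φ1M M := by
    rw [hv]; simp
  rw [hveq]
  push_cast
  field_simp
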